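/- arXiv:1412.8274 — 2 statements merged into one kernel-verified Lean document; each statement's English description precedes it below -/
import Mathlib

section
/- Let g be a non-constant entire function such that g(z)²·g''(z) is identically equal to a nonzero constant ω₀. Then no such g exists; i.e., for any non-constant entire g, g²·g'' is not a nonzero constant. -/
open Set Filter Topology Metric

noncomputable section Stmt11Aux

namespace Stmt11Aux

/-- A lift of the curve `w` through `h`, starting at `0`. -/
def IsLift (h : ℂ → ℂ) (w : ℝ → ℂ) (T : ℝ) (ζ : ℝ → ℂ) : Prop :=
  ζ 0 = 0 ∧ ContinuousOn ζ (Icc 0 T) ∧ ∀ t ∈ Icc 0 T, h (ζ t) = w t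

section Lifts

variable {h F : ℂ → ℂ} {u : ℂ} {w : ℝ → ℂ}

/-- Local representation of a lift through a local left inverse. -/
theorem lift_locrep {T : ℝ} {ζ : ℝ → ℂ} (hζ : IsLift h w T ζ)
    {t₀ : ℝ} (ht₀ : t₀ ∈ Icc 0 T) {ψ : ℂ → ℂ}
    (hψ : ∀ᶠ x in 𝓝 (ζ t₀), ψ (h x) = x) :
    ∀ᶠ t in 𝓝[Icc 0 T] t₀, ζ t = ψ (w t) := by
  obtain ⟨hζ0, hζc, hζw⟩ := hζ
  have h1 : ∀ᶠ t in 𝓝[Icc 0 T] t₀, ψ (h (ζ t)) = ζ t := (hζc t₀ ht₀).eventually hψ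
  have h2 : ∀ᶠ t in 𝓝[Icc 0 T] t₀, t ∈ Icc 0 T := self_mem_nhdsWithin
  filter_upwards [h1, h2] with t h1t h2t
  rw [← h1t, hζw t h2t]

theorem lift_strict (hstrict : ∀ z, HasStrictDerivAt h (F (h z)) z)
    (hne : ∀ t : ℝ, 0 ≤ t → F (w t) ≠ 0)
    {T : ℝ} {ζ : ℝ → ℂ} (hζ : IsLift h w T ζ) {t₀ : ℝ} (ht₀ : t₀ ∈ Icc 0 T) :
    HasStrictDerivAt h (F (w t₀)) (ζ t₀) ∧ F (w t₀) ≠ 0 := by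
  have hval : h (ζ t₀) = w t₀ := hζ.2.2 t₀ ht₀
  refine ⟨?_, hne t₀ ht₀.1⟩
  have := hstrict (ζ t₀)
  rwa [hval] at this

/-- Lifts have the expected derivative within the interval. -/
theorem lift_hasDerivWithinAt (hstrict : ∀ z, HasStrictDerivAt h (F (h z)) z)
    (hne : ∀ t : ℝ, 0 ≤ t → F (w t) ≠ 0) (hwd : ∀ t : ℝ, HasDerivAt w u t)
    {T : ℝ} {ζ : ℝ → ℂ} (hζ : IsLift h w T ζ) {t₀ : ℝ} (ht₀ : t₀ ∈ Icc 0 T) :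
    HasDerivWithinAt ζ (u • (F (w t₀))⁻¹) (Icc 0 T) t₀ := by
  obtain ⟨hs, hne'⟩ := lift_strict hstrict hne hζ ht₀
  have hval : h (ζ t₀) = w t₀ := hζ.2.2 t₀ ht₀
  set ψ : ℂ → ℂ := hs.localInverse h (F (w t₀)) (ζ t₀) hne' with hψdef
  have hψd : HasStrictDerivAt ψ (F (w t₀))⁻¹ (w t₀) := by
    have := hs.to_localInverse hne'
    rwa [hval] at this
  have hLI : ∀ᶠ x in 𝓝 (ζ t₀), ψ (h x) = x := by
    have := (hs.hasStrictFDerivAt_equiv hne').eventually_left_inverse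
    exact this
  have hrep := lift_locrep ⟨hζ.1, hζ.2.1, hζ.2.2⟩ ht₀ hLI
  have hval' : ζ t₀ = ψ (w t₀) := by
    rw [← hval]
    exact (hLI.self_of_nhds).symm
  have hcomp : HasDerivAt (fun t : ℝ => ψ (w t)) (u • (F (w t₀))⁻¹) t₀ :=
    HasDerivAt.scomp t₀ hψd.hasDerivAt (hwd t₀)
  exact hcomp.hasDerivWithinAt.congr_of_eventuallyEq hrep hval'

/-- Lifts have the expected (full) derivative at interior points. -/
theorem lift_hasDerivAt (hstrict : ∀ z, HasStrictDerivAt h (F (h z)) z)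
    (hne : ∀ t : ℝ, 0 ≤ t → F (w t) ≠ 0) (hwd : ∀ t : ℝ, HasDerivAt w u t)
    {T : ℝ} {ζ : ℝ → ℂ} (hζ : IsLift h w T ζ) {t₀ : ℝ} (ht₀ : t₀ ∈ Ioo 0 T) :
    HasDerivAt ζ (u • (F (w t₀))⁻¹) t₀ := by
  have h1 := lift_hasDerivWithinAt hstrict hne hwd hζ (Ioo_subset_Icc_self ht₀)
  have h2 : Icc 0 T ∈ 𝓝 t₀ := Icc_mem_nhds ht₀.1 ht₀.2
  exact h1.hasDerivAt h2

/-- Uniqueness of lifts. -/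
theorem lift_unique (hstrict : ∀ z, HasStrictDerivAt h (F (h z)) z)
    (hne : ∀ t : ℝ, 0 ≤ t → F (w t) ≠ 0)
    {T : ℝ} {ζ₁ ζ₂ : ℝ → ℂ} (hζ₁ : IsLift h w T ζ₁)
    (hζ₂ : IsLift h w T ζ₂) : EqOn ζ₁ ζ₂ (Icc 0 T) := by
  intro t ht
  by_contra hne12
  set B := {r : ℝ | r ∈ Icc 0 T ∧ ζ₁ r ≠ ζ₂ r} with hB
  have hBne : B.Nonempty := ⟨t, ht, hne12⟩
  have hBbd : BddBelow B := ⟨0, fun b hb => hb.1.1⟩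
  set τ := sInf B with hτdef
  have hτmem : τ ∈ Icc 0 T :=
    ⟨le_csInf hBne fun b hb => hb.1.1, le_trans (csInf_le hBbd ⟨ht, hne12⟩) ht.2⟩
  have hlt : ∀ r ∈ Icc 0 T, r < τ → ζ₁ r = ζ₂ r := by
    intro r hr hrτ
    by_contra hner
    exact absurd (csInf_le hBbd ⟨hr, hner⟩) (not_le.2 hrτ)
  -- the two lifts agree at τ
  have hval : ζ₁ τ = ζ₂ τ := by
    rcases eq_or_lt_of_le hτmem.1 with h0 | hpos
    · rw [← h0, hζ₁.1, hζ₂.1]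
    · have hsub : Ioo 0 τ ⊆ Icc 0 T :=
        fun r hr => ⟨le_of_lt hr.1, le_trans (le_of_lt hr.2) hτmem.2⟩
      have hnb : (𝓝[Ioo 0 τ] τ).NeBot := right_nhdsWithin_Ioo_neBot hpos
      have h1 : Tendsto ζ₁ (𝓝[Ioo 0 τ] τ) (𝓝 (ζ₁ τ)) :=
        (hζ₁.2.1 τ hτmem).mono_left (nhdsWithin_mono τ hsub)
      have h2 : Tendsto ζ₂ (𝓝[Ioo 0 τ] τ) (𝓝 (ζ₂ τ)) :=
        (hζ₂.2.1 τ hτmem).mono_left (nhdsWithin_mono τ hsub)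
      have heq : ζ₁ =ᶠ[𝓝[Ioo 0 τ] τ] ζ₂ :=
        eventually_nhdsWithin_of_forall fun r hr => hlt r (hsub hr) hr.2
      exact tendsto_nhds_unique (h1.congr' heq) h2
  -- local representation around τ gives eventual equality
  obtain ⟨hs, hFne⟩ := lift_strict hstrict hne hζ₁ hτmem
  set ψ : ℂ → ℂ := (hs.hasStrictFDerivAt_equiv hFne).localInverse h _ (ζ₁ τ) with hψdef
  have hLI : ∀ᶠ x in 𝓝 (ζ₁ τ), ψ (h x) = x :=
    (hs.hasStrictFDerivAt_equiv hFne).eventually_left_inverse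
  have hLI₂ : ∀ᶠ x in 𝓝 (ζ₂ τ), ψ (h x) = x := by rw [← hval]; exact hLI
  have hrep₁ := lift_locrep hζ₁ hτmem hLI
  have hrep₂ := lift_locrep hζ₂ hτmem hLI₂
  have hev : ∀ᶠ r in 𝓝[Icc 0 T] τ, ζ₁ r = ζ₂ r := by
    filter_upwards [hrep₁, hrep₂] with r h1 h2
    rw [h1, h2]
  -- extract a ball and contradict the infimum property
  obtain ⟨δ, hδpos, hball⟩ := mem_nhdsWithin_iff.1 hev
  obtain ⟨b, hbB, hbτ⟩ := (csInf_lt_iff hBbd hBne).1 (show sInf B < τ + δ by linarith)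
  have hbge : τ ≤ b := csInf_le hBbd hbB
  have : ζ₁ b = ζ₂ b := hball ⟨by
      rw [mem_ball, Real.dist_eq, abs_lt]; constructor <;> linarith, hbB.1⟩
  exact hbB.2 this

/-- Lifts restrict. -/
theorem lift_mono {T T' : ℝ} {ζ : ℝ → ℂ} (hζ : IsLift h w T ζ) (hT' : T' ≤ T) :
    IsLift h w T' ζ :=
  ⟨hζ.1, hζ.2.1.mono (Icc_subset_Icc le_rfl hT'), fun t ht => hζ.2.2 t ⟨ht.1, ht.2.trans hT'⟩⟩

/-- Continuity gluing helper. -/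
theorem continuousOn_glue {f : ℝ → ℂ} {a b c : ℝ}
    (h₁ : ContinuousOn f (Icc a b)) (h₂ : ContinuousOn f (Icc b c))
    (hab : a ≤ b) (hbc : b ≤ c) : ContinuousOn f (Icc a c) := by
  rw [← Icc_union_Icc_eq_Icc hab hbc]
  intro x hx
  rcases hx with hx1 | hx2
  · rcases eq_or_lt_of_le hx1.2 with hxb | hxb
    · exact ((h₁ x hx1).union (h₂ x (by rw [hxb]; exact left_mem_Icc.2 hbc)))
    · refine ((h₁ x hx1).union (continuousWithinAt_of_notMem_closure ?_))
      rw [closure_Icc]  -- might fail if b > c degenerate; b ≤ c so fine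
      intro hmem
      exact absurd hmem.1 (not_le.2 hxb)
  · rcases eq_or_lt_of_le hx2.1 with hxb | hxb
    · refine ((h₁ x (by rw [← hxb]; exact right_mem_Icc.2 hab)).union (h₂ x hx2))
    · refine (ContinuousWithinAt.union (continuousWithinAt_of_notMem_closure ?_) (h₂ x hx2))
      rw [closure_Icc]
      intro hmem
      exact absurd hmem.2 (not_le.2 hxb)

/-- Lifts can be extended a bit. -/
theorem lift_extend (hstrict : ∀ z, HasStrictDerivAt h (F (h z)) z)
    (hne : ∀ t : ℝ, 0 ≤ t → F (w t) ≠ 0) (hwc : Continuous w)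
    {T : ℝ} {ζ : ℝ → ℂ} (hT : 0 ≤ T) (hζ : IsLift h w T ζ) :
    ∃ δ : ℝ, 0 < δ ∧ ∃ ζ' : ℝ → ℂ, IsLift h w (T + δ) ζ' := by
  obtain ⟨hs, hFne⟩ := lift_strict hstrict hne hζ (right_mem_Icc.2 hT)
  have hval : h (ζ T) = w T := hζ.2.2 T (right_mem_Icc.2 hT)
  set Heq := hs.hasStrictFDerivAt_equiv hFne with hHeq
  set Φ := Heq.toOpenPartialHomeomorph h with hΦ
  have hsrc : ζ T ∈ Φ.source := Heq.mem_toOpenPartialHomeomorph_source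
  have htgt : w T ∈ Φ.target := by
    rw [← hval]; exact Heq.image_mem_toOpenPartialHomeomorph_target
  have hopen : IsOpen (w ⁻¹' Φ.target) := Φ.open_target.preimage hwc
  obtain ⟨δ, hδpos, hball⟩ := Metric.isOpen_iff.1 hopen T htgt
  refine ⟨δ / 2, by linarith, fun t => if t ≤ T then ζ t else Φ.symm (w t), ?_, ?_, ?_⟩
  · simp only [if_pos hT, hζ.1]
  · -- continuity
    have hsymm : ∀ t ∈ Icc T (T + δ / 2), w t ∈ Φ.target := by
      intro t htm
      apply hball
      rw [mem_ball, Real.dist_eq, abs_lt]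
      constructor <;> [linarith [htm.1]; linarith [htm.2]]
    have hc₂ : ContinuousOn (fun t => Φ.symm (w t)) (Icc T (T + δ / 2)) :=
      Φ.continuousOn_symm.comp hwc.continuousOn hsymm
    have heqif : ∀ t ∈ Icc T (T + δ / 2),
        (if t ≤ T then ζ t else Φ.symm (w t)) = Φ.symm (w t) := by
      intro t htm
      by_cases hle : t ≤ T
      · have : t = T := le_antisymm hle htm.1
        subst this
        rw [if_pos le_rfl, ← hval]
        exact (Φ.left_inv hsrc).symm
      · rw [if_neg hle]
    apply continuousOn_glue (b := T) _ _ hT (by linarith)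
    · apply hζ.2.1.congr
      intro t htm
      simp [htm.2]
    · exact hc₂.congr heqif
  · intro t htm
    by_cases hle : t ≤ T
    · simp only [hle, if_true]; exact hζ.2.2 t ⟨htm.1, hle⟩
    · simp only [hle, if_false]
      have hwt : w t ∈ Φ.target := by
        apply hball
        rw [mem_ball, Real.dist_eq, abs_lt]
        constructor <;> [linarith [not_le.1 hle]; linarith [htm.2]]
      exact Φ.right_inv hwt

/-- Closure: if lifts exist strictly below `T'`, a lift exists at `T'`. -/
theorem lift_closed (hstrict : ∀ z, HasStrictDerivAt h (F (h z)) z)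
    (hne : ∀ t : ℝ, 0 ≤ t → F (w t) ≠ 0) (hwd : ∀ t : ℝ, HasDerivAt w u t)
    (hu : ‖u‖ = 1) (hFc : Continuous F) (hwc : Continuous w)
    {T' : ℝ} (hT' : 0 < T')
    (hall : ∀ T : ℝ, 0 ≤ T → T < T' → ∃ ζ, IsLift h w T ζ) :
    ∃ ζ, IsLift h w T' ζ := by
  classical
  have hhc : Continuous h := continuous_iff_continuousAt.2 fun z => (hstrict z).hasDerivAt.continuousAt
  have hch : ∀ T : ℝ, ∃ ζ, (0 ≤ T ∧ T < T') → IsLift h w T ζ := by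
    intro T
    by_cases hT : 0 ≤ T ∧ T < T'
    · obtain ⟨ζ, hζ⟩ := hall T hT.1 hT.2; exact ⟨ζ, fun _ => hζ⟩
    · exact ⟨fun _ => 0, fun hT2 => absurd hT2 hT⟩
  choose fam hfam using hch
  set ζ : ℝ → ℂ := fun t => fam t t with hζdef
  have hfam' : ∀ T, 0 ≤ T → T < T' → IsLift h w T (fam T) := fun T h1 h2 => hfam T ⟨h1, h2⟩
  have hcons : ∀ T, 0 ≤ T → T < T' → ∀ t ∈ Icc 0 T, ζ t = fam T t := by
    intro T h1 h2 t htm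
    exact lift_unique hstrict hne (hfam' t htm.1 (lt_of_le_of_lt htm.2 h2))
      (lift_mono (hfam' T h1 h2) htm.2) ⟨htm.1, le_rfl⟩
  have hζw : ∀ t, 0 ≤ t → t < T' → h (ζ t) = w t := fun t h0 h1 =>
    (hfam' t h0 h1).2.2 t ⟨h0, le_rfl⟩
  have hζ0 : ζ 0 = 0 := (hfam' 0 le_rfl hT').1
  -- uniform bound for the derivative
  obtain ⟨t₀m, ht₀m, hmin'⟩ := (isCompact_Icc (a := (0:ℝ)) (b := T')).exists_isMinOn
      ⟨0, left_mem_Icc.2 hT'.le⟩ ((hFc.comp hwc).norm.continuousOn)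
  have hmin : ∀ x ∈ Icc (0:ℝ) T', ‖F (w t₀m)‖ ≤ ‖F (w x)‖ := fun x hx => hmin' hx
  set m := ‖F (w t₀m)‖ with hm
  have hmpos : 0 < m := norm_pos_iff.2 (hne t₀m ht₀m.1)
  have hminv : 0 ≤ m⁻¹ := inv_nonneg.2 hmpos.le
  -- Lipschitz bound on each interval [0, T]
  have hLip : ∀ T, 0 ≤ T → T < T' → ∀ t₁ ∈ Icc 0 T, ∀ t₂ ∈ Icc 0 T,
      ‖ζ t₁ - ζ t₂‖ ≤ m⁻¹ * ‖t₁ - t₂‖ := by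
    intro T h1 h2 t₁ hm₁ t₂ hm₂
    rw [hcons T h1 h2 t₁ hm₁, hcons T h1 h2 t₂ hm₂]
    refine Convex.norm_image_sub_le_of_norm_hasDerivWithin_le
      (f' := fun t => u • (F (w t))⁻¹)
      (fun x hx => lift_hasDerivWithinAt hstrict hne hwd (hfam' T h1 h2) hx)
      (fun x hx => ?_) (convex_Icc 0 T) hm₂ hm₁
    have hxle : ‖F (w x)‖⁻¹ ≤ m⁻¹ := by
      apply inv_anti₀ hmpos
      exact hmin x ⟨hx.1, le_trans hx.2 h2.le⟩
    calc ‖u • (F (w x))⁻¹‖ = ‖F (w x)‖⁻¹ := by rw [norm_smul, hu, one_mul, norm_inv]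
    _ ≤ m⁻¹ := hxle
  -- the canonical approximating sequence
  set tseq : ℕ → ℝ := fun n => T' - T' / (n + 1) with htseqdef
  have htmem : ∀ n : ℕ, 0 ≤ tseq n ∧ tseq n < T' := by
    intro n
    have hpos : (0:ℝ) < n + 1 := by positivity
    have h1 : 0 < T' / (n + 1) := div_pos hT' hpos
    have h2 : T' / (n + 1) ≤ T' := by
      rw [div_le_iff₀ hpos]
      nlinarith [hT'.le]
    exact ⟨by simp only [htseqdef]; linarith, by simp only [htseqdef]; linarith⟩
  have htanti : ∀ (N n : ℕ), N ≤ n → T' - T' / (N + 1) ≤ tseq n := by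
    intro N n hNn
    have hcast : ((N:ℝ) + 1) ≤ (n:ℝ) + 1 := by
      have : (N:ℝ) ≤ (n:ℝ) := Nat.cast_le.mpr hNn
      linarith
    have hdd : T' / ((n:ℝ) + 1) ≤ T' / ((N:ℝ) + 1) := by
      gcongr
    simp only [htseqdef]; linarith
  have hdiv0 : Tendsto (fun n : ℕ => T' / (n + 1)) atTop (𝓝 0) := by
    have h0 := tendsto_one_div_add_atTop_nhds_zero_nat (𝕜 := ℝ)
    have := h0.const_mul T'
    simpa [div_eq_mul_inv, mul_comm, mul_one_div] using this
  have htto : Tendsto tseq atTop (𝓝 T') := by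
    have h1 : Tendsto (fun _ : ℕ => T') atTop (𝓝 T') := tendsto_const_nhds
    have := h1.sub hdiv0
    simpa using this
  have hcauchy : CauchySeq (fun n => ζ (tseq n)) := by
    apply cauchySeq_of_le_tendsto_0 (b := fun N : ℕ => m⁻¹ * (T' / (N + 1)))
    · intro n p N hn hp
      have hTn := htmem n; have hTp := htmem p; have hTN := htmem N
      set T := max (tseq n) (tseq p) with hTdef
      have hT1 : 0 ≤ T := le_trans hTn.1 (le_max_left _ _)
      have hT2 : T < T' := max_lt hTn.2 hTp.2
      have h1 : tseq n ∈ Icc 0 T := ⟨hTn.1, le_max_left _ _⟩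
      have h2 : tseq p ∈ Icc 0 T := ⟨hTp.1, le_max_right _ _⟩
      have hl := hLip T hT1 hT2 (tseq n) h1 (tseq p) h2
      set D := T' / ((N:ℝ) + 1) with hDdef
      have hbn : T' - D ≤ tseq n := htanti N n hn
      have hbp : T' - D ≤ tseq p := htanti N p hp
      have hn2 : tseq n < T' := hTn.2
      have hp2 : tseq p < T' := hTp.2
      have habs : ‖tseq n - tseq p‖ ≤ D := by
        rw [Real.norm_eq_abs, abs_le]
        refine ⟨by linarith, by linarith⟩
      calc dist (ζ (tseq n)) (ζ (tseq p)) = ‖ζ (tseq n) - ζ (tseq p)‖ := dist_eq_norm _ _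
      _ ≤ m⁻¹ * ‖tseq n - tseq p‖ := hl
      _ ≤ m⁻¹ * D := mul_le_mul_of_nonneg_left habs hminv
    · have := hdiv0.const_mul m⁻¹
      simpa using this
  obtain ⟨zstar, hzstar⟩ := cauchySeq_tendsto_of_complete hcauchy
  -- tail estimate
  have htail : ∀ t, 0 ≤ t → t < T' → ‖ζ t - zstar‖ ≤ m⁻¹ * (T' - t) := by
    intro t h0 h1
    have hlim : Tendsto (fun n => ‖ζ t - ζ (tseq n)‖) atTop (𝓝 ‖ζ t - zstar‖) :=
      (tendsto_const_nhds.sub hzstar).norm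
    apply le_of_tendsto hlim
    have hev : ∀ᶠ n in atTop, t < tseq n := htto.eventually (eventually_gt_nhds h1)
    filter_upwards [hev] with n hn
    have hTn := htmem n
    have hl := hLip (tseq n) hTn.1 hTn.2 t ⟨h0, hn.le⟩ (tseq n) ⟨hTn.1, le_rfl⟩
    have hn2 : tseq n < T' := hTn.2
    have habs : ‖t - tseq n‖ ≤ T' - t := by
      rw [Real.norm_eq_abs, abs_le]
      refine ⟨by linarith, by linarith⟩
    calc ‖ζ t - ζ (tseq n)‖ ≤ m⁻¹ * ‖t - tseq n‖ := hl
    _ ≤ m⁻¹ * (T' - t) := mul_le_mul_of_nonneg_left habs hminv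
  -- the lift at time `T'`
  refine ⟨fun t => if t < T' then ζ t else zstar, ?_, ?_, ?_⟩
  · simp only [if_pos hT', hζ0]
  · -- continuity
    intro t₀ ht₀
    rcases lt_or_eq_of_le ht₀.2 with hlt | heq
    · set T := (t₀ + T') / 2 with hTdef
      have hT1 : 0 ≤ T := by simp only [hTdef]; linarith [ht₀.1]
      have hT2 : T < T' := by simp only [hTdef]; linarith
      have ht₀T : t₀ < T := by simp only [hTdef]; linarith
      have hmem : Icc 0 T ∈ 𝓝[Icc 0 T'] t₀ := by
        rw [mem_nhdsWithin_iff]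
        refine ⟨T - t₀, by linarith, fun r hr => ?_⟩
        obtain ⟨hr1, hr2⟩ := hr
        rw [mem_ball, Real.dist_eq, abs_lt] at hr1
        exact ⟨hr2.1, by linarith [hr1.2]⟩
      have hc : ContinuousWithinAt (fam T) (Icc 0 T') t₀ :=
        ((hfam' T hT1 hT2).2.1 t₀ ⟨ht₀.1, ht₀T.le⟩).mono_of_mem_nhdsWithin hmem
      apply hc.congr_of_eventuallyEq
      · filter_upwards [hmem] with r hr
        have hrT' : r < T' := lt_of_le_of_lt hr.2 hT2
        simp only [if_pos hrT']
        exact hcons T hT1 hT2 r hr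
      · simp only [if_pos hlt]
        exact hcons T hT1 hT2 t₀ ⟨ht₀.1, ht₀T.le⟩
    · subst heq
      rw [Metric.continuousWithinAt_iff]
      intro ε hε
      have hm1 : (0:ℝ) < m⁻¹ + 1 := by positivity
      refine ⟨ε / (m⁻¹ + 1), by positivity, fun {r} hr hrd => ?_⟩
      rw [Real.dist_eq] at hrd
      simp only [if_neg (lt_irrefl t₀)]
      by_cases hrT : r < t₀
      · simp only [if_pos hrT]
        rw [dist_eq_norm]
        have ht1 := htail r hr.1 hrT
        have ht2 : t₀ - r ≤ |r - t₀| := by rw [abs_sub_comm]; exact le_abs_self _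
        have h3 : m⁻¹ * (t₀ - r) < ε := by
          have h4 : t₀ - r < ε / (m⁻¹ + 1) := lt_of_le_of_lt ht2 hrd
          have h5 : 0 ≤ t₀ - r := by linarith
          calc m⁻¹ * (t₀ - r) ≤ (m⁻¹ + 1) * (t₀ - r) := by nlinarith
          _ < (m⁻¹ + 1) * (ε / (m⁻¹ + 1)) := by
              exact mul_lt_mul_of_pos_left h4 hm1
          _ = ε := by field_simp
        exact lt_of_le_of_lt ht1 h3
      · have hreq : r = t₀ := le_antisymm hr.2 (not_lt.1 hrT)
        rw [hreq]
        simp only [if_neg (lt_irrefl t₀), dist_self]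
        exact hε
  · intro t htm
    by_cases hlt : t < T'
    · simp only [if_pos hlt]; exact hζw t htm.1 hlt
    · have hteq : t = T' := le_antisymm htm.2 (not_lt.1 hlt)
      subst hteq
      simp only [if_neg (lt_irrefl t)]
      have h1 : Tendsto (fun n => h (ζ (tseq n))) atTop (𝓝 (h zstar)) :=
        (hhc.continuousAt.tendsto).comp hzstar
      have h2 : (fun n => h (ζ (tseq n))) = fun n => w (tseq n) :=
        funext fun n => hζw _ (htmem n).1 (htmem n).2
      have h3 : Tendsto (fun n => w (tseq n)) atTop (𝓝 (w t)) :=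
        (hwc.continuousAt.tendsto).comp htto
      rw [h2] at h1
      exact tendsto_nhds_unique h1 h3

/-- Lifts exist for all nonnegative times. -/
theorem lift_exists (hstrict : ∀ z, HasStrictDerivAt h (F (h z)) z)
    (hne : ∀ t : ℝ, 0 ≤ t → F (w t) ≠ 0) (hwd : ∀ t : ℝ, HasDerivAt w u t)
    (hu : ‖u‖ = 1) (hFc : Continuous F) (hwc : Continuous w) (hw0 : w 0 = h 0) :
    ∀ T : ℝ, 0 ≤ T → ∃ ζ, IsLift h w T ζ := by
  intro T₀ hT₀
  by_contra hbad
  set B := {T : ℝ | 0 ≤ T ∧ ¬ ∃ ζ, IsLift h w T ζ} with hBdef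
  have hBne : B.Nonempty := ⟨T₀, hT₀, hbad⟩
  have hBbd : BddBelow B := ⟨0, fun b hb => hb.1⟩
  set τ := sInf B with hτdef
  have hτ0 : 0 ≤ τ := le_csInf hBne fun b hb => hb.1
  have hbelow : ∀ T, 0 ≤ T → T < τ → ∃ ζ, IsLift h w T ζ := by
    intro T h0 hlt
    by_contra h'
    exact absurd (csInf_le hBbd ⟨h0, h'⟩) (not_le.2 hlt)
  have hτlift : ∃ ζ, IsLift h w τ ζ := by
    rcases eq_or_lt_of_le hτ0 with h0 | hpos
    · refine ⟨fun _ => 0, rfl, continuousOn_const, ?_⟩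
      intro t ht
      rw [← h0] at ht
      have : t = 0 := le_antisymm ht.2 ht.1
      rw [this, hw0]
    · exact lift_closed hstrict hne hwd hu hFc hwc hpos hbelow
  obtain ⟨ζ, hζ⟩ := hτlift
  obtain ⟨δ, hδ, ζ', hζ'⟩ := lift_extend hstrict hne hwc hτ0 hζ
  have : τ + δ ≤ τ := by
    rw [hτdef]
    apply le_csInf hBne
    intro b hb
    by_contra hlt
    exact hb.2 ⟨ζ', lift_mono hζ' (le_of_lt (not_le.1 hlt))⟩
  linarith

end Lifts

/-- The main blow-up lemma: there is no entire `h` satisfying an autonomous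
ODE `h' = F(h)` with `F ∘ h` never vanishing, once a ray with suitable growth exists. -/
theorem blowup (h F : ℂ → ℂ) (hh : Differentiable ℂ h) (hFc : Continuous F)
    (hder : ∀ z, deriv h z = F (h z)) (hne : ∀ z, F (h z) ≠ 0)
    (u : ℂ) (hu : ‖u‖ = 1)
    (hray : ∀ t : ℝ, 0 ≤ t → F (h 0 + t • u) ≠ 0)
    (A T₁ : ℝ) (hT₁ : 1 ≤ T₁) (hA : 0 < A)
    (hgrow : ∀ t : ℝ, T₁ ≤ t → t ^ 2 / A ≤ ‖F (h 0 + t • u)‖) : False := by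
  classical
  set w : ℝ → ℂ := fun t => h 0 + t • u with hwdef
  have hwc : Continuous w := by
    apply continuous_const.add
    exact continuous_id.smul continuous_const
  have hwd : ∀ t : ℝ, HasDerivAt w u t := by
    intro t
    have h1 : HasDerivAt (fun s : ℝ => s • u) ((1:ℝ) • u) t :=
      (hasDerivAt_id t).smul_const u
    have h2 := h1.const_add (h 0)
    rw [one_smul] at h2; exact h2
  have hstrict : ∀ z, HasStrictDerivAt h (F (h z)) z := by
    intro z
    have h1 : ContDiffAt ℂ 1 h z := (hh.contDiff (n := 1)).contDiffAt
    have h2 := h1.hasStrictDerivAt one_ne_zero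
    rwa [hder z] at h2
  have hne' : ∀ t : ℝ, 0 ≤ t → F (w t) ≠ 0 := hray
  have hw0 : w 0 = h 0 := by simp [hwdef]
  have hEx := lift_exists hstrict hne' hwd hu hFc hwc hw0
  -- the uniform bound on lifts
  have hT₁0 : (0:ℝ) < T₁ := lt_of_lt_of_le one_pos hT₁
  obtain ⟨t₀m, ht₀m, hmin'⟩ := (isCompact_Icc (a := (0:ℝ)) (b := T₁)).exists_isMinOn
      ⟨0, left_mem_Icc.2 hT₁0.le⟩ ((hFc.comp hwc).norm.continuousOn)
  have hmin : ∀ x ∈ Icc (0:ℝ) T₁, ‖F (w t₀m)‖ ≤ ‖F (w x)‖ := fun x hx => hmin' hx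
  set m := ‖F (w t₀m)‖ with hmdef
  have hmpos : 0 < m := norm_pos_iff.2 (hne' t₀m ht₀m.1)
  have hminv : 0 ≤ m⁻¹ := inv_nonneg.2 hmpos.le
  set K := m⁻¹ * T₁ + A / T₁ with hKdef
  have hK0 : 0 ≤ K := by positivity
  -- every lift is bounded by K
  have hbound : ∀ T, 0 ≤ T → ∀ ζ, IsLift h w T ζ → ∀ t ∈ Icc 0 T, ‖ζ t‖ ≤ K := by
    intro T hT0 ζ hζ t htm
    -- stage 1 bound
    have hstage1 : ∀ t', t' ∈ Icc 0 (min T T₁) → ‖ζ t'‖ ≤ m⁻¹ * T₁ := by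
      intro t' ht'
      have hζ1 : IsLift h w (min T T₁) ζ := lift_mono hζ (min_le_left _ _)
      have h0mem : (0:ℝ) ∈ Icc (0:ℝ) (min T T₁) :=
        left_mem_Icc.2 (le_min hT0 hT₁0.le)
      have hmvt := Convex.norm_image_sub_le_of_norm_hasDerivWithin_le
        (f' := fun s => u • (F (w s))⁻¹)
        (fun x hx => lift_hasDerivWithinAt hstrict hne' hwd hζ1 hx)
        (fun x hx => by
          have hxle : ‖F (w x)‖⁻¹ ≤ m⁻¹ := by
            apply inv_anti₀ hmpos
            exact hmin x ⟨hx.1, le_trans hx.2 (min_le_right _ _)⟩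
          calc ‖u • (F (w x))⁻¹‖ = ‖F (w x)‖⁻¹ := by rw [norm_smul, hu, one_mul, norm_inv]
          _ ≤ m⁻¹ := hxle)
        (convex_Icc 0 (min T T₁)) h0mem ht'
      calc ‖ζ t'‖ = ‖ζ t' - ζ 0‖ := by rw [hζ.1, sub_zero]
      _ ≤ m⁻¹ * ‖t' - 0‖ := hmvt
      _ = m⁻¹ * t' := by rw [sub_zero, Real.norm_eq_abs, abs_of_nonneg ht'.1]
      _ ≤ m⁻¹ * T₁ := by
          apply mul_le_mul_of_nonneg_left _ hminv
          exact le_trans ht'.2 (min_le_right _ _)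
    by_cases hcase : t ≤ T₁
    · have h1 := hstage1 t ⟨htm.1, le_min htm.2 hcase⟩
      have h2 : (0:ℝ) ≤ A / T₁ := by positivity
      calc ‖ζ t‖ ≤ m⁻¹ * T₁ := h1
      _ ≤ K := by rw [hKdef]; linarith
    · -- stage 2
      have htT₁ : T₁ < t := not_le.1 hcase
      have hT₁T : T₁ ≤ T := le_trans htT₁.le htm.2
      have hζT₁ : ‖ζ T₁‖ ≤ m⁻¹ * T₁ :=
        hstage1 T₁ ⟨hT₁0.le, le_min hT₁T le_rfl⟩
      have hsub₀ : Icc T₁ t ⊆ Icc 0 T :=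
        fun x hx => ⟨le_trans hT₁0.le hx.1, le_trans hx.2 htm.2⟩
      have hsub : ∀ x ∈ Icc T₁ t, ‖ζ x - ζ T₁‖ ≤ A / T₁ - A / x := by
        have hcont : ContinuousOn (fun s => ζ s - ζ T₁) (Icc T₁ t) :=
          (hζ.2.1.mono hsub₀).sub continuousOn_const
        have hderf : ∀ x ∈ Ico T₁ t,
            HasDerivWithinAt (fun s => ζ s - ζ T₁) (u • (F (w x))⁻¹) (Ici x) x := by
          intro x hx
          have hxIoo : x ∈ Ioo 0 T := ⟨lt_of_lt_of_le hT₁0 hx.1, lt_of_lt_of_le hx.2 htm.2⟩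
          exact ((lift_hasDerivAt hstrict hne' hwd hζ hxIoo).sub_const (ζ T₁)).hasDerivWithinAt
        have hBcont : ContinuousOn (fun s : ℝ => A / T₁ - A / s) (Icc T₁ t) := by
          apply ContinuousOn.sub continuousOn_const
          apply ContinuousOn.div continuousOn_const continuousOn_id
          intro x hx
          exact ne_of_gt (lt_of_lt_of_le hT₁0 hx.1)
        have hBderiv : ∀ x ∈ Ico T₁ t,
            HasDerivWithinAt (fun s : ℝ => A / T₁ - A / s) (A / x ^ 2) (Ici x) x := by
          intro x hx
          have hx0 : x ≠ 0 := ne_of_gt (lt_of_lt_of_le hT₁0 hx.1)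
          have h1 : HasDerivAt (fun s : ℝ => s⁻¹) (-((x:ℝ) ^ 2)⁻¹) x := hasDerivAt_inv hx0
          have h2 : HasDerivAt (fun s : ℝ => A / T₁ - A / s) (-(A * -((x:ℝ) ^ 2)⁻¹)) x := by
            simpa [div_eq_mul_inv] using (h1.const_mul A).const_sub (A / T₁)
          have h3 : HasDerivAt (fun s : ℝ => A / T₁ - A / s) (A / x ^ 2) x := by
            convert h2 using 1
            field_simp
          exact h3.hasDerivWithinAt
        have hbnd : ∀ x ∈ Ico T₁ t, ‖u • (F (w x))⁻¹‖ ≤ A / x ^ 2 := by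
          intro x hx
          have hx1 : T₁ ≤ x := hx.1
          have hxpos : 0 < x := lt_of_lt_of_le hT₁0 hx1
          have hgx := hgrow x hx1
          have hgpos : (0:ℝ) < x ^ 2 / A := by positivity
          have hinv : ‖F (w x)‖⁻¹ ≤ (x ^ 2 / A)⁻¹ := inv_anti₀ hgpos hgx
          calc ‖u • (F (w x))⁻¹‖ = ‖F (w x)‖⁻¹ := by rw [norm_smul, hu, one_mul, norm_inv]
          _ ≤ (x ^ 2 / A)⁻¹ := hinv
          _ = A / x ^ 2 := by rw [inv_div]
        have ha0 : ‖(fun s => ζ s - ζ T₁) T₁‖ ≤ A / T₁ - A / T₁ := by simp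
        exact fun x hx =>
          image_norm_le_of_norm_deriv_right_le_deriv_boundary' hcont hderf ha0 hBcont hBderiv hbnd hx
      have h4 := hsub t ⟨htT₁.le, le_rfl⟩
      have htpos : (0:ℝ) < t := lt_of_lt_of_le hT₁0 htT₁.le
      have h5 : (0:ℝ) ≤ A / t := le_of_lt (div_pos hA htpos)
      have h6 : ‖ζ t‖ ≤ ‖ζ t - ζ T₁‖ + ‖ζ T₁‖ := by
        have := norm_add_le (ζ t - ζ T₁) (ζ T₁)
        simpa using this
      rw [hKdef]
      linarith
  -- final contradiction
  obtain ⟨x₀, hx₀mem, hx₀⟩ := (isCompact_closedBall (0:ℂ) K).exists_isMaxOn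
      ⟨0, mem_closedBall_self hK0⟩ (hh.continuous.norm.continuousOn)
  set Mh := ‖h x₀‖ with hMhdef
  have hMh0 : (0:ℝ) ≤ Mh := norm_nonneg _
  set T := T₁ + ‖h 0‖ + Mh + 1 with hTdef
  have hT0 : (0:ℝ) ≤ T := by positivity
  obtain ⟨ζ, hζ⟩ := hEx T hT0
  have h1 : ‖ζ T‖ ≤ K := hbound T hT0 ζ hζ T (right_mem_Icc.2 hT0)
  have h2 : ‖h (ζ T)‖ ≤ Mh := hx₀ (mem_closedBall_zero_iff.2 h1)
  have h3 : h (ζ T) = w T := hζ.2.2 T (right_mem_Icc.2 hT0)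
  have h4 : T - ‖h 0‖ ≤ ‖w T‖ := by
    have e1 : ‖(T:ℝ) • u‖ = T := by
      rw [norm_smul, hu, mul_one, Real.norm_eq_abs, abs_of_nonneg hT0]
    have e2 : ‖(T:ℝ) • u‖ ≤ ‖w T‖ + ‖h 0‖ := by
      have e3 : (T:ℝ) • u = w T - h 0 := by simp [hwdef]
      rw [e3]
      exact norm_sub_le _ _
    linarith
  rw [h3] at h2
  have h5 : T - ‖h 0‖ ≤ Mh := le_trans h4 h2
  rw [hTdef] at h5
  linarith

end Stmt11Aux

end Stmt11Aux

/-- There is no non-constant entire function `g` with `g² g''` identically equal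
to a nonzero constant. -/
theorem stmt11 (g : ℂ → ℂ) (hg : Differentiable ℂ g)
    (hnc : ¬ ∃ c : ℂ, ∀ z, g z = c) (ω₀ : ℂ) (hω₀ : ω₀ ≠ 0) :
    ¬ ∀ z : ℂ, (g z) ^ 2 * iteratedDeriv 2 g z = ω₀ := by
  intro hid
  classical
  -- g never vanishes
  have hgne : ∀ z, g z ≠ 0 := by
    intro z hz
    apply hω₀
    rw [← hid z, hz]
    ring
  have h2eq : ∀ z, iteratedDeriv 2 g z = deriv (deriv g) z := by
    intro z
    rw [iteratedDeriv_succ, iteratedDeriv_one]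
  -- the derivative of g is entire
  have hgan : AnalyticOnNhd ℂ g univ := fun z _ => hg.analyticAt z
  have hg'an : AnalyticOnNhd ℂ (deriv g) univ := hgan.deriv
  have hg' : Differentiable ℂ (deriv g) := fun z => (hg'an z (mem_univ z)).differentiableAt
  -- the value of the second derivative
  have hdd : ∀ z, deriv (deriv g) z = ω₀ / (g z) ^ 2 := by
    intro z
    have hz := hid z
    rw [h2eq z] at hz
    rw [eq_div_iff (pow_ne_zero 2 (hgne z))]
    linear_combination hz
  have hgd : ∀ z, HasDerivAt g (deriv g z) z := fun z => hg.differentiableAt.hasDerivAt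
  have hg'd : ∀ z, HasDerivAt (deriv g) (ω₀ / (g z) ^ 2) z := by
    intro z
    have := (hg' z).hasDerivAt
    rwa [hdd z] at this
  -- the first integral E = (g')² + 2ω₀/g is constant
  set E : ℂ → ℂ := fun z => (deriv g z) ^ 2 + (2 * ω₀) * (g z)⁻¹ with hEdef
  have hEd : ∀ z, HasDerivAt E 0 z := by
    intro z
    have h1 : HasDerivAt (fun y => (deriv g y) ^ 2)
        (2 * deriv g z * (ω₀ / (g z) ^ 2)) z := by
      have := (hg'd z).fun_pow 2
      simpa using this
    have h2 : HasDerivAt (fun y => (g y)⁻¹) (-(deriv g z) / (g z) ^ 2) z :=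
      (hgd z).inv (hgne z)
    have h3 : HasDerivAt (fun y => (deriv g y) ^ 2 + 2 * ω₀ * (g y)⁻¹)
        (2 * deriv g z * (ω₀ / g z ^ 2) + 2 * ω₀ * (-deriv g z / g z ^ 2)) z :=
      h1.add (h2.const_mul (2 * ω₀))
    convert h3 using 1
    have hgz := hgne z
    ring
  have hEconst : ∀ z, E z = E 0 := fun z =>
    is_const_of_deriv_eq_zero (fun y => (hEd y).differentiableAt)
      (fun y => (hEd y).deriv) z 0
  set C := E 0 with hCdef
  set F : ℂ → ℂ := fun x => (x ^ 2 - C) ^ 2 / (4 * ω₀) with hFdef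
  have h4ω : (4 : ℂ) * ω₀ ≠ 0 := mul_ne_zero (by norm_num) hω₀
  have hkey : ∀ z, (deriv g z) ^ 2 - C = -(2 * ω₀) * (g z)⁻¹ := by
    intro z
    have h5 : (deriv g z) ^ 2 + (2 * ω₀) * (g z)⁻¹ = C := hEconst z
    linear_combination h5
  have hder : ∀ z, deriv (deriv g) z = F (deriv g z) := by
    intro z
    rw [hdd z]
    show ω₀ / (g z) ^ 2 = ((deriv g z) ^ 2 - C) ^ 2 / (4 * ω₀)
    rw [hkey z]
    have hgz := hgne z
    field_simp
    ring
  have hne : ∀ z, F (deriv g z) ≠ 0 := by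
    intro z
    rw [← hder z, hdd z]
    exact div_ne_zero hω₀ (pow_ne_zero 2 (hgne z))
  have hFc : Continuous F := by
    apply Continuous.div_const
    exact ((continuous_pow 2).sub continuous_const).pow 2
  -- square root of C
  obtain ⟨s, hs⟩ := IsAlgClosed.exists_pow_nat_eq C (n := 2) two_pos
  have hfac : ∀ x : ℂ, x ^ 2 - C = (x - s) * (x + s) := by
    intro x
    rw [← hs]
    ring
  have hFeq : ∀ x : ℂ, F x = 0 ↔ (x = s ∨ x = -s) := by
    intro x
    show (x ^ 2 - C) ^ 2 / (4 * ω₀) = 0 ↔ _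
    rw [div_eq_zero_iff]
    simp only [h4ω, or_false]
    rw [pow_eq_zero_iff (two_ne_zero), hfac x, mul_eq_zero, sub_eq_zero,
      add_eq_zero_iff_eq_neg]
  have hw₀ : deriv g 0 ≠ s ∧ deriv g 0 ≠ -s := by
    constructor <;> intro hc <;> exact hne 0 ((hFeq _).2 (by rw [hc]; simp))
  -- choice of a good direction
  have hchoice : ∃ u : ℂ, ‖u‖ = 1 ∧ ∀ t : ℝ, 0 ≤ t → F (deriv g 0 + t • u) ≠ 0 := by
    by_contra hcon
    push_neg at hcon
    have hbad : ∀ u : ℂ, ‖u‖ = 1 →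
        ∃ t : ℝ, 0 ≤ t ∧ (deriv g 0 + t • u = s ∨ deriv g 0 + t • u = -s) := by
      intro u hu1
      obtain ⟨t, ht0, htF⟩ := hcon u hu1
      exact ⟨t, ht0, (hFeq _).1 htF⟩
    obtain ⟨t₁, ht₁0, hρ₁⟩ := hbad 1 (by simp)
    obtain ⟨t₂, ht₂0, hρ₂⟩ := hbad Complex.I (by simp)
    obtain ⟨t₃, ht₃0, hρ₃⟩ := hbad (-1) (by norm_num)
    have hWpos : ∀ (t : ℝ) (u : ℂ), 0 ≤ t →
        (deriv g 0 + t • u = s ∨ deriv g 0 + t • u = -s) → 0 < t := by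
      intro t u ht hsor
      rcases eq_or_lt_of_le ht with h0 | h
      · exfalso
        rw [← h0] at hsor
        simp only [zero_smul, add_zero] at hsor
        rcases hsor with h' | h'
        · exact hw₀.1 h'
        · exact hw₀.2 h'
      · exact h
    have hpair : ∀ (t r : ℝ) (u v : ℂ), 0 < t → 0 < r → ‖u‖ = 1 → ‖v‖ = 1 →
        t • u = r • v → u = v := by
      intro t r u v ht hr hu1 hv1 heq
      have hnorm : t = r := by
        have hn := congrArg norm heq
        rw [norm_smul, norm_smul, hu1, hv1] at hn
        simpa [Real.norm_eq_abs, abs_of_pos ht, abs_of_pos hr] using hn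
      rw [hnorm] at heq
      exact smul_right_injective ℂ (ne_of_gt hr) heq
    have h1pos := hWpos t₁ 1 ht₁0 hρ₁
    have h2pos := hWpos t₂ Complex.I ht₂0 hρ₂
    have h3pos := hWpos t₃ (-1) ht₃0 hρ₃
    have hcancel : ∀ (a b : ℂ), deriv g 0 + a = deriv g 0 + b → a = b := by
      intro a b hab
      exact add_left_cancel hab
    have hIne1 : Complex.I ≠ 1 := by
      intro hc
      have := congrArg Complex.im hc
      simp at this
    have h1neN : (1 : ℂ) ≠ -1 := by
      intro hc
      norm_num at hc
    have hIneN : Complex.I ≠ -1 := by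
      intro hc
      have := congrArg Complex.im hc
      simp at this
    rcases hρ₁ with e1 | e1 <;> rcases hρ₂ with e2 | e2 <;> rcases hρ₃ with e3 | e3
    · exact hIne1 (hpair t₂ t₁ _ _ h2pos h1pos (by simp) (by simp)
        (hcancel _ _ (e2.trans e1.symm)))
    · exact hIne1 (hpair t₂ t₁ _ _ h2pos h1pos (by simp) (by simp)
        (hcancel _ _ (e2.trans e1.symm)))
    · exact h1neN (hpair t₁ t₃ _ _ h1pos h3pos (by simp) (by norm_num)
        (hcancel _ _ (e1.trans e3.symm)))
    · exact hIneN (hpair t₂ t₃ _ _ h2pos h3pos (by simp) (by norm_num)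
        (hcancel _ _ (e2.trans e3.symm)))
    · exact hIneN (hpair t₂ t₃ _ _ h2pos h3pos (by simp) (by norm_num)
        (hcancel _ _ (e2.trans e3.symm)))
    · exact h1neN (hpair t₁ t₃ _ _ h1pos h3pos (by simp) (by norm_num)
        (hcancel _ _ (e1.trans e3.symm)))
    · exact hIne1 (hpair t₂ t₁ _ _ h2pos h1pos (by simp) (by simp)
        (hcancel _ _ (e2.trans e1.symm)))
    · exact hIne1 (hpair t₂ t₁ _ _ h2pos h1pos (by simp) (by simp)
        (hcancel _ _ (e2.trans e1.symm)))
  obtain ⟨u, hu1, hray⟩ := hchoice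
  -- growth constants
  set d := ‖(4 : ℂ) * ω₀‖ with hddef
  have hd0 : 0 < d := norm_pos_iff.2 h4ω
  set A := 64 * d with hAdef
  have hApos : 0 < A := by positivity
  set T₁ := 2 * ‖deriv g 0‖ + 4 * ‖C‖ + 4 with hT₁def
  have hn0 : (0:ℝ) ≤ ‖deriv g 0‖ := norm_nonneg _
  have hnC : (0:ℝ) ≤ ‖C‖ := norm_nonneg _
  have hT₁1 : 1 ≤ T₁ := by
    rw [hT₁def]
    linarith
  have hgrow : ∀ t : ℝ, T₁ ≤ t → t ^ 2 / A ≤ ‖F (deriv g 0 + t • u)‖ := by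
    intro t ht
    rw [hT₁def] at ht
    have ht1 : 1 ≤ t := by linarith
    have ht0 : 0 ≤ t := by linarith
    set W := deriv g 0 + (t : ℝ) • u with hWdef
    have hwt : t - ‖deriv g 0‖ ≤ ‖W‖ := by
      have e1 : ‖(t : ℝ) • u‖ = t := by
        rw [norm_smul, hu1, mul_one, Real.norm_eq_abs, abs_of_nonneg ht0]
      have e4 : -(deriv g 0) + (deriv g 0 + (t : ℝ) • u) = (t : ℝ) • u :=
        neg_add_cancel_left _ _
      have e5 := norm_add_le (-(deriv g 0)) (deriv g 0 + (t : ℝ) • u)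
      rw [e4, e1, norm_neg] at e5
      rw [hWdef]
      linarith
    have hhalf : t / 2 ≤ t - ‖deriv g 0‖ := by linarith
    have hW2 : (t / 2) ^ 2 - ‖C‖ ≤ ‖W ^ 2 - C‖ := by
      have e5 : ‖W ^ 2‖ - ‖C‖ ≤ ‖W ^ 2 - C‖ := norm_sub_norm_le _ _
      have e6 : (t / 2) ^ 2 ≤ ‖W ^ 2‖ := by
        rw [norm_pow]
        apply pow_le_pow_left₀ (by linarith)
        linarith
      linarith
    have ht8 : t ^ 2 / 8 ≤ (t / 2) ^ 2 - ‖C‖ := by nlinarith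
    have hFW : ‖F W‖ = ‖W ^ 2 - C‖ ^ 2 / d := by
      show ‖(W ^ 2 - C) ^ 2 / (4 * ω₀)‖ = _
      rw [norm_div, norm_pow]
    have h9 : (t ^ 2 / 8) ^ 2 ≤ ‖W ^ 2 - C‖ ^ 2 :=
      pow_le_pow_left₀ (by positivity) (le_trans ht8 hW2) 2
    have h10 : t ^ 2 / A ≤ (t ^ 2 / 8) ^ 2 / d := by
      have h11a : 1 ≤ t ^ 2 := by nlinarith
      have h11 : t ^ 2 ≤ t ^ 4 := by nlinarith [mul_le_mul_of_nonneg_left h11a (sq_nonneg t)]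
      rw [hAdef, div_le_div_iff₀ (by positivity) hd0]
      have h12 : 0 ≤ (t ^ 4 - t ^ 2) * d := mul_nonneg (by linarith) hd0.le
      nlinarith [h12]
    calc t ^ 2 / A ≤ (t ^ 2 / 8) ^ 2 / d := h10
    _ ≤ ‖W ^ 2 - C‖ ^ 2 / d := by gcongr
    _ = ‖F W‖ := hFW.symm
  exact Stmt11Aux.blowup (deriv g) F hg' hFc hder hne u hu1 hray A T₁ hT₁1 hApos hgrow
end

section
/- Let f be a rational function of the form f(z) = A·∏(z−a_i)^{m_i} (a non-constant polynomial) with every m_i ≥ k ≥ 2, and let n₀ ≥ 2, n_k ≥ 1. Then for any nonzero complex ω, the polynomial M[f] − ω has at least two distinct zeros in ℂ. -/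
open Finset

open Polynomial in
private lemma iter_deriv_ne_zero : ∀ (j : ℕ) (p : ℂ[X]), p ≠ 0 → j ≤ p.natDegree →
    derivative^[j] p ≠ 0 := by
  intro j
  induction j with
  | zero => intro p hp _; simpa using hp
  | succ j ih =>
      intro p hp hj
      have hpos : 0 < p.natDegree := by omega
      have hdeg : degree (derivative p) = (p.natDegree - 1 : ℕ) :=
        degree_derivative_eq p hpos
      have hne : derivative p ≠ 0 := by
        intro h
        rw [h, degree_zero] at hdeg
        exact (by simp at hdeg)
      have hnd : (derivative p).natDegree = p.natDegree - 1 :=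
        natDegree_eq_of_degree_eq_some hdeg
      rw [Function.iterate_succ_apply]
      exact ih (derivative p) hne (by omega)

open Polynomial in
private lemma iteratedDeriv_polyeval (p : ℂ[X]) (j : ℕ) :
    iteratedDeriv j (fun z => p.eval z) = fun z => (derivative^[j] p).eval z := by
  induction j with
  | zero => simp
  | succ j ih =>
      rw [iteratedDeriv_succ, ih, Function.iterate_succ_apply']
      funext z
      exact Polynomial.deriv (p := Polynomial.derivative^[j] p) (x := z)

open Polynomial in
private lemma key_two_roots (P : ℂ[X]) (hP : P ≠ 0) (b ω : ℂ) (hω : ω ≠ 0)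
    (h0 : P.eval b = 0) (h1 : (derivative P).eval b = 0) :
    ∃ z₁ z₂ : ℂ, z₁ ≠ z₂ ∧ P.eval z₁ = ω ∧ P.eval z₂ = ω := by
  set G : ℂ[X] := P - C ω with hGdef
  have hGb : G.eval b = -ω := by simp [hGdef, h0]
  have hG0 : G ≠ 0 := fun h => hω (by simpa [h] using hGb.symm)
  have hPdeg : 0 < P.natDegree := by
    by_contra h
    push_neg at h
    obtain ⟨c, hc⟩ := natDegree_eq_zero.mp (Nat.le_zero.mp h)
    have hc0 : c = 0 := by rw [← hc] at h0; simpa using h0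
    exact hP (by rw [← hc, hc0, map_zero])
  have hGdeg : G.natDegree = P.natDegree := by
    rw [hGdef, natDegree_sub_C]
  set d := G.natDegree with hd
  have hdpos : 0 < d := by omega
  have hsplits : Splits G := IsAlgClosed.splits G
  have hcard : G.roots.card = d := (splits_iff_card_roots.mp hsplits)
  obtain ⟨z₁, hz₁⟩ := Complex.exists_root (f := G) (natDegree_pos_iff_degree_pos.mp hdpos)
  have hz₁' : P.eval z₁ = ω := by
    have : P.eval z₁ - ω = 0 := by simpa [hGdef] using hz₁
    linear_combination this
  by_contra hcon
  push_neg at hcon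
  have hall : ∀ z ∈ G.roots, z = z₁ := by
    intro z hz
    have hzroot : G.eval z = 0 := (mem_roots hG0).mp hz
    have hzω : P.eval z = ω := by
      have : P.eval z - ω = 0 := by simpa [hGdef] using hzroot
      linear_combination this
    by_contra hne
    exact (hcon z z₁ hne hzω) hz₁'
  have hroots : G.roots = Multiset.replicate d z₁ :=
    Multiset.eq_replicate.mpr ⟨hcard, hall⟩
  have hGform : G = C G.leadingCoeff * (X - C z₁) ^ d := by
    have h := hsplits.eq_prod_roots
    rw [hroots] at h
    simpa [Multiset.map_replicate, Multiset.prod_replicate] using h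
  have hlc : G.leadingCoeff ≠ 0 := leadingCoeff_ne_zero.mpr hG0
  have hderG : (derivative G).eval b = 0 := by
    have : derivative G = derivative P := by simp [hGdef]
    rw [this]; exact h1
  have hcalc : G.leadingCoeff * ((d : ℂ) * (b - z₁) ^ (d - 1)) = 0 := by
    have := hderG
    rw [hGform] at this
    simpa [derivative_mul, derivative_pow, derivative_X_sub_C, mul_comm, mul_assoc,
      mul_left_comm] using this
  have hdC : (d : ℂ) ≠ 0 := Nat.cast_ne_zero.mpr (by omega)
  have hpow : (b - z₁) ^ (d - 1) = 0 := by
    rcases mul_eq_zero.mp hcalc with h | h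
    · exact absurd h hlc
    · rcases mul_eq_zero.mp h with h | h
      · exact absurd h hdC
      · exact h
  rcases Nat.eq_or_lt_of_le hdpos with h | h
  · -- d = 1
    rw [← h] at hpow
    simp at hpow
  · -- d ≥ 2
    have hbz : b = z₁ := by
      have hsub : b - z₁ = 0 := pow_eq_zero_iff (by omega : d - 1 ≠ 0) |>.mp hpow
      exact sub_eq_zero.mp hsub
    have : P.eval b = ω := hbz ▸ hz₁'
    rw [h0] at this
    exact hω this.symm

set_option maxHeartbeats 800000 in
/-- If `f(z) = A ∏ (z - a_i)^{m_i}` is a non-constant polynomial with distinct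
roots `a_i`, each of multiplicity `m_i ≥ k ≥ 2`, and `n₀ ≥ 2`, `n_k ≥ 1`, then
for any `ω ≠ 0` the function `M[f] - ω` has at least two distinct zeros. -/
theorem stmt15 (k s : ℕ) (n : ℕ → ℕ) (hk : 2 ≤ k) (hs : 1 ≤ s)
    (hn0 : 2 ≤ n 0) (hnk : 1 ≤ n k)
    (A ω : ℂ) (hA : A ≠ 0) (hω : ω ≠ 0)
    (a : ℕ → ℂ) (m : ℕ → ℕ)
    (ha : ∀ i < s, ∀ j < s, a i = a j → i = j)
    (hm : ∀ i < s, k ≤ m i)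
    (f : ℂ → ℂ)
    (hf : ∀ z, f z = A * ∏ i ∈ Finset.range s, (z - a i) ^ (m i)) :
    ∃ z₁ z₂ : ℂ, z₁ ≠ z₂ ∧
      ∏ j ∈ Finset.range (k + 1), (iteratedDeriv j f z₁) ^ (n j) = ω ∧
      ∏ j ∈ Finset.range (k + 1), (iteratedDeriv j f z₂) ^ (n j) = ω := by
  classical
  open Polynomial in
  set F : ℂ[X] := C A * ∏ i ∈ Finset.range s, (X - C (a i)) ^ (m i) with hFdef
  have hfF : f = fun z => F.eval z := by
    funext z
    simp [hf z, hFdef, eval_prod]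
  have hF0 : F ≠ 0 := by
    apply mul_ne_zero
    · simpa using hA
    · rw [Finset.prod_ne_zero_iff]
      intro i _
      exact pow_ne_zero _ (X_sub_C_ne_zero (a i))
  have h0s : (0 : ℕ) ∈ Finset.range s := Finset.mem_range.mpr hs
  have hdvdF : (X - C (a 0)) ^ (m 0) ∣ F :=
    Dvd.dvd.mul_left (Finset.dvd_prod_of_mem _ h0s) _
  have hm0 : k ≤ m 0 := hm 0 hs
  have hFdeg : m 0 ≤ F.natDegree := by
    have := natDegree_le_of_dvd hdvdF hF0
    simpa [natDegree_pow, natDegree_X_sub_C] using this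
  set P : ℂ[X] := ∏ j ∈ Finset.range (k + 1), (derivative^[j] F) ^ (n j) with hPdef
  have hP0 : P ≠ 0 := by
    rw [hPdef, Finset.prod_ne_zero_iff]
    intro j hj
    have hj' : j ≤ k := by simpa [Nat.lt_succ_iff] using Finset.mem_range.mp hj
    exact pow_ne_zero _ (iter_deriv_ne_zero j F hF0 (by omega))
  have hMP : ∀ z, ∏ j ∈ Finset.range (k + 1), (iteratedDeriv j f z) ^ (n j) = P.eval z := by
    intro z
    rw [hPdef, eval_prod]
    apply Finset.prod_congr rfl
    intro j _
    rw [hfF, iteratedDeriv_polyeval, eval_pow]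
  have hsq : (X - C (a 0)) ^ 2 ∣ P := by
    have h1 : (X - C (a 0)) ^ 2 ∣ (X - C (a 0)) ^ (m 0) := pow_dvd_pow _ (by omega)
    have h2 : F ∣ F ^ (n 0) := dvd_pow_self F (by omega)
    have h3 : F ^ (n 0) ∣ P := by
      have := Finset.dvd_prod_of_mem (fun j => (derivative^[j] F) ^ (n j))
        (Finset.mem_range.mpr (Nat.succ_pos k))
      simpa using this
    exact h1.trans (hdvdF.trans (h2.trans h3))
  obtain ⟨Q, hQ⟩ := hsq
  have hPa : P.eval (a 0) = 0 := by rw [hQ]; simp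
  have hP'a : (derivative P).eval (a 0) = 0 := by
    rw [hQ]
    simp [derivative_mul, derivative_pow, derivative_X_sub_C]
  obtain ⟨z₁, z₂, hne, h₁, h₂⟩ := key_two_roots P hP0 (a 0) ω hω hPa hP'a
  exact ⟨z₁, z₂, hne, by rw [hMP z₁]; exact h₁, by rw [hMP z₂]; exact h₂⟩
end
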